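/- Let n > 2 be an integer and set F = {n−1} ⊆ Fin n. For a ≠ b in Fin n define g_{a,b} : Fin n → Fin n by g_{a,b}(x) = a if x = n−1 and g_{a,b}(x) = b otherwise. Let g, g′ : Fin n → Fin n be distinct functions such that there exist no a ≠ b with g = g_{a,b} and g′ = g_{b,a}. Then there exists a function h : Fin n → Fin n such that exactly one of the two conditions h(g(h(g(0)))) = n−1 and h(g′(h(g′(0)))) = n−1 holds. (Equivalently, in the DFA with states Fin n → Fin n, alphabet Fin n → Fin n, initial state the identity, transition δ(g, f) = f ∘ g, and final states {g | g(g(0)) = n−1}, the states g and g′ are separable.) -/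

import Mathlib

/-- in the square-root monster automaton with `F = {n-1}`, any two distinct
states `g ≠ g'` that do not form a pair `(g_{a,b}, g_{b,a})` are separable. -/
theorem stmt7 (n : ℕ) (hn : 2 < n) (g g' : Fin n → Fin n) (hne : g ≠ g')
    (hno : ¬ ∃ a b : Fin n, a ≠ b ∧
      (∀ x, g x = if x = (⟨n - 1, by omega⟩ : Fin n) then a else b) ∧
      (∀ x, g' x = if x = (⟨n - 1, by omega⟩ : Fin n) then b else a)) :
    ∃ h : Fin n → Fin n,
      Xor' (h (g (h (g ⟨0, by omega⟩))) = (⟨n - 1, by omega⟩ : Fin n))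
           (h (g' (h (g' ⟨0, by omega⟩))) = (⟨n - 1, by omega⟩ : Fin n)) := by
  set z : Fin n := ⟨0, by omega⟩ with hzdef
  set t : Fin n := ⟨n - 1, by omega⟩ with htdef
  have htz : t ≠ z := by
    simp only [htdef, hzdef, ne_eq, Fin.mk.injEq]
    omega
  by_cases hss : g z = g' z
  · -- Case 1 : g 0 = g' 0
    obtain ⟨w, hw⟩ : ∃ w, g w ≠ g' w := Function.ne_iff.mp hne
    by_cases hp : g w = g z
    · have hq : g' w ≠ g z := fun h => hw (hp.trans h.symm)
      refine ⟨fun x => if x = g z then w else if x = g' w then (if w = t then z else t) else z, ?_⟩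
      rw [← hss]
      by_cases hwt : w = t
      · subst hwt
        exact Or.inl ⟨by simp [hp], by simp [hq, Ne.symm htz]⟩
      · exact Or.inr ⟨by simp [hq, hwt], by simp [hp, hwt]⟩
    · by_cases hq : g' w = g z
      · refine ⟨fun x => if x = g z then w else if x = g w then (if w = t then z else t) else z, ?_⟩
        rw [← hss]
        by_cases hwt : w = t
        · subst hwt
          exact Or.inr ⟨by simp [hq], by simp [hp, Ne.symm htz]⟩
        · exact Or.inl ⟨by simp [hp, hwt], by simp [hq, hwt]⟩
      · refine ⟨fun x => if x = g z then w else if x = g w then t else z, ?_⟩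
        rw [← hss]
        exact Or.inl ⟨by simp [hp], by simp [hq, Ne.symm hw, Ne.symm htz]⟩
  · -- Case 2 : g 0 ≠ g' 0
    by_cases hgt : g t = g' z
    · by_cases hg't : g' t = g z
      · -- g t = g' 0 and g' t = g 0
        by_cases hU : ∃ u, u ≠ t ∧ g u ≠ g z
        · obtain ⟨u, hut, hu⟩ := hU
          by_cases hu2 : g u = g' z
          · refine ⟨fun x => if x = g z then u else if x = g' z then t else z, ?_⟩
            exact Or.inl ⟨by simp [hu2, Ne.symm hss], by simp [Ne.symm hss, hg't, hut]⟩
          · refine ⟨fun x => if x = g z then u else if x = g' z then z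
              else if x = g u then t else z, ?_⟩
            exact Or.inl ⟨by simp [hu, hu2], by simp [Ne.symm hss, Ne.symm htz]⟩
        · by_cases hV : ∃ u, u ≠ t ∧ g' u ≠ g' z
          · obtain ⟨u, hut, hu⟩ := hV
            by_cases hu2 : g' u = g z
            · refine ⟨fun x => if x = g z then t else if x = g' z then u else z, ?_⟩
              exact Or.inr ⟨by simp [Ne.symm hss, hu2], by simp [hgt, Ne.symm hss, hut]⟩
            · refine ⟨fun x => if x = g z then z else if x = g' z then u
                else if x = g' u then t else z, ?_⟩
              exact Or.inr ⟨by simp [Ne.symm hss, hu, hu2], by simp [Ne.symm htz]⟩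
          · -- the excluded pair: contradiction with hno
            exfalso
            push_neg at hU hV
            refine hno ⟨g' z, g z, Ne.symm hss, fun x => ?_, fun x => ?_⟩
            · by_cases hx : x = t
              · simp [hx, hgt]
              · simp [show ¬(x = (⟨n - 1, by omega⟩ : Fin n)) from hx, hx, hU x hx]
            · by_cases hx : x = t
              · simp [hx, hg't]
              · simp [show ¬(x = (⟨n - 1, by omega⟩ : Fin n)) from hx, hx, hV x hx]
      · refine ⟨fun x => if x = g z then z else t, ?_⟩
        exact Or.inr ⟨by simp [Ne.symm hss, hg't], by simp [Ne.symm htz]⟩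
    · refine ⟨fun x => if x = g' z then z else t, ?_⟩
      exact Or.inl ⟨by simp [hss, hgt], by simp [Ne.symm htz]⟩
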